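/- arXiv:1809.07044 — 5 statements merged into one kernel-verified Lean document; each statement's English description precedes it below -/
import Mathlib

section
/- Let τ : ℝ → ℝ be any function and, for ρ > 0, let W_ρ = {x ∈ ℝ² : ∀ θ ∈ ℝ, x • (cos θ, sin θ) ≤ ρ·τ(θ)}. If ρ₁, ρ₂ > 0 and x₁, x₂ ∈ ℝ² are such that the translates x₁ + W_{ρ₁} and x₂ + W_{ρ₂} have a non-empty intersection, then there exists x₀ ∈ ℝ² such that (x₁ + W_{ρ₁}) ∪ (x₂ + W_{ρ₂}) ⊆ x₀ + W_{ρ₁+ρ₂}. -/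
open Real Set
open scoped Pointwise

/-- The Wulff shape associated with the surface tension `τ` and the size parameter `ρ`:
the set of points of the plane whose inner product with `(cos θ, sin θ)` is at most
`ρ * τ θ` for every direction `θ`. -/
def wulff (τ : ℝ → ℝ) (ρ : ℝ) : Set (ℝ × ℝ) :=
  {x : ℝ × ℝ | ∀ θ : ℝ, x.1 * Real.cos θ + x.2 * Real.sin θ ≤ ρ * τ θ}

/-- Two intersecting translates of Wulff shapes of sizes `ρ₁` and `ρ₂` are jointly
contained in a single translate of the Wulff shape of size `ρ₁ + ρ₂`. -/
theorem wulff_union_subset_translate (τ : ℝ → ℝ) (ρ₁ ρ₂ : ℝ) (hρ₁ : 0 < ρ₁) (hρ₂ : 0 < ρ₂)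
    (x₁ x₂ : ℝ × ℝ)
    (h : ((x₁ +ᵥ wulff τ ρ₁) ∩ (x₂ +ᵥ wulff τ ρ₂)).Nonempty) :
    ∃ x₀ : ℝ × ℝ, (x₁ +ᵥ wulff τ ρ₁) ∪ (x₂ +ᵥ wulff τ ρ₂) ⊆ x₀ +ᵥ wulff τ (ρ₁ + ρ₂) := by
  obtain ⟨y, hy₁, hy₂⟩ := h
  rw [mem_vadd_set_iff_neg_vadd_mem] at hy₁ hy₂
  refine ⟨x₁ + x₂ - y, fun z hz => ?_⟩
  rw [mem_vadd_set_iff_neg_vadd_mem]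
  rcases hz with hz | hz <;> rw [mem_vadd_set_iff_neg_vadd_mem] at hz <;>
    intro θ
  · have h1 := hz θ
    have h2 := hy₂ θ
    simp only [vadd_eq_add, neg_add_eq_sub, wulff, mem_setOf_eq] at *
    have := add_le_add h1 h2
    simp only [Prod.fst_sub, Prod.snd_sub, Prod.fst_add, Prod.snd_add] at *
    nlinarith [this]
  · have h1 := hz θ
    have h2 := hy₁ θ
    simp only [vadd_eq_add, neg_add_eq_sub, wulff, mem_setOf_eq] at *
    have := add_le_add h1 h2
    simp only [Prod.fst_sub, Prod.snd_sub, Prod.fst_add, Prod.snd_add] at *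
    nlinarith [this]
end

section
/- Let τ : ℝ → ℝ be continuous, positive and π-periodic, and for ρ > 0 let W_ρ = {x ∈ ℝ² : ∀ θ ∈ ℝ, x • (cos θ, sin θ) ≤ ρ·τ(θ)}. Then for all ρ₁ > 0 and ρ₀ > 0, the union of W_{ρ₁} with all the translates x + W_{ρ₀} over points x in the topological frontier of W_{ρ₁+ρ₀} equals W_{ρ₁+2ρ₀}; i.e. W_{ρ₁} ∪ ⋃_{x ∈ frontier(W_{ρ₁+ρ₀})} (x + W_{ρ₀}) = W_{ρ₁+2ρ₀}. -/
open Real Set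
open scoped Pointwise

lemma wulff_isClosed (τ : ℝ → ℝ) (ρ : ℝ) : IsClosed (wulff τ ρ) := by
  have : wulff τ ρ = ⋂ θ : ℝ, {x : ℝ × ℝ | x.1 * Real.cos θ + x.2 * Real.sin θ ≤ ρ * τ θ} := by
    ext x; simp [wulff]
  rw [this]
  exact isClosed_iInter fun θ => isClosed_le (by fun_prop) continuous_const

/-- The union of the Wulff shape `W_{ρ₁}` with all the externally tangent Wulff shapes
`x + W_{ρ₀}`, `x ∈ ∂W_{ρ₁+ρ₀}`, is the Wulff shape `W_{ρ₁+2ρ₀}`. -/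
theorem wulff_union_tangent_translates (τ : ℝ → ℝ) (hcont : Continuous τ)
    (hpos : ∀ θ : ℝ, 0 < τ θ) (hper : ∀ θ : ℝ, τ (θ + Real.pi) = τ θ)
    (ρ₁ ρ₀ : ℝ) (hρ₁ : 0 < ρ₁) (hρ₀ : 0 < ρ₀) :
    wulff τ ρ₁ ∪ ⋃ x ∈ frontier (wulff τ (ρ₁ + ρ₀)), (x +ᵥ wulff τ ρ₀)
      = wulff τ (ρ₁ + 2 * ρ₀) := by
  apply Set.Subset.antisymm
  · -- easy direction
    rintro z (hz | hz)
    · intro θ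
      have := hz θ
      nlinarith [hpos θ]
    · simp only [mem_iUnion] at hz
      obtain ⟨x, hx, hz⟩ := hz
      have hxW : x ∈ wulff τ (ρ₁ + ρ₀) := (wulff_isClosed τ (ρ₁ + ρ₀)).frontier_subset hx
      rw [Set.mem_vadd_set] at hz
      obtain ⟨y, hy, rfl⟩ := hz
      intro θ
      have h1 := hxW θ
      have h2 := hy θ
      simp only [vadd_eq_add, Prod.fst_add, Prod.snd_add]
      nlinarith
  · -- hard direction
    intro z hz
    by_cases hz1 : z ∈ wulff τ ρ₁
    · exact Or.inl hz1
    right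
    set f : ℝ → ℝ := fun θ => (z.1 * Real.cos θ + z.2 * Real.sin θ) / τ θ with hf
    have hfle : ∀ θ, f θ ≤ ρ₁ + 2 * ρ₀ := fun θ => (div_le_iff₀ (hpos θ)).2 (hz θ)
    have hbdd : BddAbove (Set.range f) := ⟨ρ₁ + 2 * ρ₀, by rintro _ ⟨θ, rfl⟩; exact hfle θ⟩
    set m := sSup (Set.range f) with hm
    have hfm : ∀ θ, f θ ≤ m := fun θ => le_csSup hbdd (mem_range_self θ)
    have hm_le : m ≤ ρ₁ + 2 * ρ₀ := csSup_le (range_nonempty f) (by rintro _ ⟨θ, rfl⟩; exact hfle θ)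
    have hm_gt : ρ₁ < m := by
      by_contra h
      push_neg at h
      apply hz1
      intro θ
      exact (div_le_iff₀ (hpos θ)).1 ((hfm θ).trans h)
    have hm_pos : 0 < m := hρ₁.trans hm_gt
    have hsymm : ∀ θ, -(f θ) ≤ m := by
      intro θ
      have hneg : -(f θ) = f (θ + Real.pi) := by
        simp only [hf, Real.cos_add_pi, Real.sin_add_pi, hper θ]
        ring
      rw [hneg]; exact hfm _
    set c := (ρ₁ + ρ₀) / m with hc
    have hc_pos : 0 < c := div_pos (by linarith) hm_pos
    have hcm : c * m = ρ₁ + ρ₀ := div_mul_cancel₀ _ hm_pos.ne'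
    set x : ℝ × ℝ := (c * z.1, c * z.2) with hx
    have hfτ : ∀ θ, z.1 * Real.cos θ + z.2 * Real.sin θ = f θ * τ θ := by
      intro θ
      simp only [hf]
      rw [div_mul_cancel₀ _ (hpos θ).ne']
    have hxmem : x ∈ wulff τ (ρ₁ + ρ₀) := by
      intro θ
      have h1 : f θ * τ θ ≤ m * τ θ := mul_le_mul_of_nonneg_right (hfm θ) (hpos θ).le
      calc x.1 * Real.cos θ + x.2 * Real.sin θ
          = c * (f θ * τ θ) := by rw [← hfτ θ]; simp only [hx]; ring
        _ ≤ c * (m * τ θ) := by nlinarith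
        _ = (ρ₁ + ρ₀) * τ θ := by rw [← hcm]; ring
    have hxnotint : x ∉ interior (wulff τ (ρ₁ + ρ₀)) := by
      intro hint
      have hcont2 : Continuous fun t : ℝ => ((t * x.1, t * x.2) : ℝ × ℝ) := by fun_prop
      have h1 : ((fun t : ℝ => ((t * x.1, t * x.2) : ℝ × ℝ)) 1) = x := by simp
      have hnb : (fun t : ℝ => ((t * x.1, t * x.2) : ℝ × ℝ)) ⁻¹' interior (wulff τ (ρ₁ + ρ₀))
          ∈ nhds (1 : ℝ) := by
        apply hcont2.continuousAt.preimage_mem_nhds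
        simpa using isOpen_interior.mem_nhds hint
      obtain ⟨ε, hε, hball⟩ := Metric.mem_nhds_iff.1 hnb
      set t : ℝ := 1 + ε / 2 with htdef
      have ht1 : 1 < t := by simp [htdef]; linarith
      have htpos : 0 < t := by linarith
      have htmem : ((t * x.1, t * x.2) : ℝ × ℝ) ∈ interior (wulff τ (ρ₁ + ρ₀)) := by
        apply hball
        simp only [Metric.mem_ball, Real.dist_eq, htdef]
        rw [abs_of_pos (by linarith)]
        linarith
      have hlt : m / t < m := div_lt_self hm_pos ht1
      obtain ⟨_, ⟨θ, rfl⟩, hθ⟩ := exists_lt_of_lt_csSup (range_nonempty f) hlt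
      have hw := (interior_subset htmem) θ
      simp only at hw
      have hmt : m < t * f θ := by
        rw [div_lt_iff₀ htpos] at hθ
        linarith [hθ]
      have hcalc : (t * x.1) * Real.cos θ + (t * x.2) * Real.sin θ = t * c * (f θ * τ θ) := by
        rw [← hfτ θ]; simp only [hx]; ring
      rw [hcalc] at hw
      nlinarith [hpos θ, mul_lt_mul_of_pos_right hmt (hpos θ)]
    have hxfr : x ∈ frontier (wulff τ (ρ₁ + ρ₀)) := by
      rw [frontier, (wulff_isClosed τ (ρ₁ + ρ₀)).closure_eq]
      exact ⟨hxmem, hxnotint⟩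
    refine mem_iUnion₂.2 ⟨x, hxfr, ?_⟩
    rw [Set.mem_vadd_set]
    refine ⟨(z.1 - x.1, z.2 - x.2), ?_, by simp [vadd_eq_add, Prod.ext_iff]⟩
    intro θ
    have key : (1 - c) * f θ ≤ ρ₀ := by
      rcases le_or_gt c 1 with h | h
      · nlinarith [hfm θ]
      · nlinarith [hsymm θ]
    calc (z.1 - x.1) * Real.cos θ + (z.2 - x.2) * Real.sin θ
        = (1 - c) * (f θ * τ θ) := by rw [← hfτ θ]; simp only [hx]; ring
      _ ≤ ρ₀ * τ θ := by nlinarith [hpos θ, mul_le_mul_of_nonneg_right key (hpos θ).le]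
end

section
/- Let τ : ℝ → ℝ be continuous, positive and π-periodic, and for ρ > 0 let W_ρ = {x ∈ ℝ² : ∀ θ ∈ ℝ, x • (cos θ, sin θ) ≤ ρ·τ(θ)}. Let 0 < ρ₁ < ρ₂ and ρ₀ > 0. Then there exists x ∈ ℝ² such that x + W_{ρ₀} ⊆ W_{ρ₂} and (x + W_{ρ₀}) ∩ interior(W_{ρ₁}) = ∅ if and only if ρ₀ ≤ (ρ₂ − ρ₁)/2. (Equivalently: the largest Wulff shape that fits in the annulus W_{ρ₂} ∖ interior(W_{ρ₁}) has size parameter (ρ₂ − ρ₁)/2.) -/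
open Real Set
open scoped Pointwise

namespace WulffAux

variable {τ : ℝ → ℝ} {ρ : ℝ}

lemma zero_mem (hpos : ∀ θ : ℝ, 0 < τ θ) (hρ : 0 ≤ ρ) : (0 : ℝ × ℝ) ∈ wulff τ ρ := by
  intro θ
  have := (hpos θ).le
  simp only [Prod.fst_zero, Prod.snd_zero, zero_mul, add_zero]
  positivity

lemma neg_mem (hper : ∀ θ : ℝ, τ (θ + Real.pi) = τ θ) {x : ℝ × ℝ} (hx : x ∈ wulff τ ρ) :
    -x ∈ wulff τ ρ := by
  intro θ
  have h := hx (θ + Real.pi)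
  rw [Real.cos_add_pi, Real.sin_add_pi, hper] at h
  simp only [Prod.fst_neg, Prod.snd_neg]
  linarith

lemma smul_mem {c d : ℝ} (hc : 0 < c) (hd : 0 ≤ d) {x : ℝ × ℝ} (hx : x ∈ wulff τ c) :
    (d / c) • x ∈ wulff τ d := by
  intro θ
  have h := hx θ
  have hdc : 0 ≤ d / c := div_nonneg hd hc.le
  have := mul_le_mul_of_nonneg_left h hdc
  simp only [Prod.smul_fst, Prod.smul_snd, smul_eq_mul]
  calc d / c * x.1 * Real.cos θ + d / c * x.2 * Real.sin θ
      = d / c * (x.1 * Real.cos θ + x.2 * Real.sin θ) := by ring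
    _ ≤ d / c * (c * τ θ) := this
    _ = d * τ θ := by rw [← mul_assoc, div_mul_cancel₀ d hc.ne']

lemma convex_wulff : Convex ℝ (wulff τ ρ) := by
  intro x hx y hy a b ha hb hab θ
  have h1 := hx θ
  have h2 := hy θ
  simp only [Prod.fst_add, Prod.snd_add, Prod.smul_fst, Prod.smul_snd, smul_eq_mul]
  calc (a * x.1 + b * y.1) * Real.cos θ + (a * x.2 + b * y.2) * Real.sin θ
      = a * (x.1 * Real.cos θ + x.2 * Real.sin θ)
        + b * (y.1 * Real.cos θ + y.2 * Real.sin θ) := by ring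
    _ ≤ a * (ρ * τ θ) + b * (ρ * τ θ) :=
        add_le_add (mul_le_mul_of_nonneg_left h1 ha) (mul_le_mul_of_nonneg_left h2 hb)
    _ = ρ * τ θ := by rw [← add_mul, hab, one_mul]

lemma isClosed_wulff : IsClosed (wulff τ ρ) := by
  have : wulff τ ρ = ⋂ θ : ℝ, {x : ℝ × ℝ | x.1 * Real.cos θ + x.2 * Real.sin θ ≤ ρ * τ θ} := by
    ext x; simp [wulff]
  rw [this]
  exact isClosed_iInter fun θ => isClosed_le
    ((continuous_fst.mul continuous_const).add (continuous_snd.mul continuous_const))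
    continuous_const

lemma isCompact_wulff (hpos : ∀ θ : ℝ, 0 < τ θ) (hρ : 0 ≤ ρ) : IsCompact (wulff τ ρ) := by
  refine Metric.isCompact_of_isClosed_isBounded isClosed_wulff ?_
  rw [Metric.isBounded_iff_subset_closedBall 0]
  refine ⟨ρ * τ 0 + ρ * τ Real.pi + ρ * τ (Real.pi / 2) + ρ * τ (-(Real.pi / 2)) + 1,
    fun x hx => ?_⟩
  have h0 := hx 0
  have h1 := hx Real.pi
  have h2 := hx (Real.pi / 2)
  have h3 := hx (-(Real.pi / 2))
  simp only [Real.cos_zero, Real.sin_zero, Real.cos_pi, Real.sin_pi, Real.cos_pi_div_two,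
    Real.sin_pi_div_two, Real.cos_neg, Real.sin_neg, mul_one, mul_zero, mul_neg, add_zero,
    zero_add] at h0 h1 h2 h3
  have p0 : 0 ≤ ρ * τ 0 := mul_nonneg hρ (hpos 0).le
  have p1 : 0 ≤ ρ * τ Real.pi := mul_nonneg hρ (hpos _).le
  have p2 : 0 ≤ ρ * τ (Real.pi / 2) := mul_nonneg hρ (hpos _).le
  have p3 : 0 ≤ ρ * τ (-(Real.pi / 2)) := mul_nonneg hρ (hpos _).le
  rw [Metric.mem_closedBall, dist_zero_right, Prod.norm_def]
  rw [sup_le_iff]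
  constructor
  · rw [Real.norm_eq_abs, abs_le]; constructor <;> linarith
  · rw [Real.norm_eq_abs, abs_le]; constructor <;> linarith

/-- A positive continuous periodic function has a positive lower bound. -/
lemma exists_pos_lb {f : ℝ → ℝ} {c : ℝ} (hc : 0 < c) (hf : Continuous f)
    (hp : Function.Periodic f c) (hfpos : ∀ x, 0 < f x) : ∃ ε > 0, ∀ x, ε ≤ f x := by
  obtain ⟨x₀, hx₀, hmin⟩ := (isCompact_Icc : IsCompact (Icc (0:ℝ) c)).exists_isMinOn
    (nonempty_Icc.2 hc.le) hf.continuousOn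
  refine ⟨f x₀, hfpos x₀, fun x => ?_⟩
  obtain ⟨y, hy, hxy⟩ := hp.exists_mem_Ico₀ hc x
  rw [hxy]
  exact hmin (Ico_subset_Icc_self hy)

lemma tau_lb (hcont : Continuous τ) (hpos : ∀ θ : ℝ, 0 < τ θ)
    (hper : ∀ θ : ℝ, τ (θ + Real.pi) = τ θ) : ∃ m > 0, ∀ θ, m ≤ τ θ :=
  exists_pos_lb Real.pi_pos hcont hper hpos

lemma mem_wulff_of_abs (hρ : 0 ≤ ρ) {m : ℝ} (hm : ∀ θ, m ≤ τ θ) {x : ℝ × ℝ}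
    (h : |x.1| + |x.2| ≤ ρ * m) : x ∈ wulff τ ρ := by
  intro θ
  have c1 : x.1 * Real.cos θ ≤ |x.1| := by
    calc x.1 * Real.cos θ ≤ |x.1 * Real.cos θ| := le_abs_self _
      _ = |x.1| * |Real.cos θ| := abs_mul _ _
      _ ≤ |x.1| * 1 := mul_le_mul_of_nonneg_left (Real.abs_cos_le_one θ) (abs_nonneg _)
      _ = |x.1| := mul_one _
  have c2 : x.2 * Real.sin θ ≤ |x.2| := by
    calc x.2 * Real.sin θ ≤ |x.2 * Real.sin θ| := le_abs_self _
      _ = |x.2| * |Real.sin θ| := abs_mul _ _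
      _ ≤ |x.2| * 1 := mul_le_mul_of_nonneg_left (Real.abs_sin_le_one θ) (abs_nonneg _)
      _ = |x.2| := mul_one _
  have := mul_le_mul_of_nonneg_left (hm θ) hρ
  linarith

lemma zero_mem_interior (hcont : Continuous τ) (hpos : ∀ θ : ℝ, 0 < τ θ)
    (hper : ∀ θ : ℝ, τ (θ + Real.pi) = τ θ) (hρ : 0 < ρ) :
    (0 : ℝ × ℝ) ∈ interior (wulff τ ρ) := by
  obtain ⟨m, hm0, hm⟩ := tau_lb hcont hpos hper
  rw [mem_interior_iff_mem_nhds]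
  refine Filter.mem_of_superset (Metric.ball_mem_nhds (0 : ℝ × ℝ) (show (0:ℝ) < ρ * m / 2 by positivity)) ?_
  intro y hy
  rw [Metric.mem_ball, dist_zero_right] at hy
  refine mem_wulff_of_abs hρ.le hm ?_
  have h1 : |y.1| ≤ ‖y‖ := by simpa [Real.norm_eq_abs] using norm_fst_le y
  have h2 : |y.2| ≤ ‖y‖ := by simpa [Real.norm_eq_abs] using norm_snd_le y
  linarith

lemma lt_of_mem_interior {y : ℝ × ℝ} (hy : y ∈ interior (wulff τ ρ)) (θ : ℝ) :
    y.1 * Real.cos θ + y.2 * Real.sin θ < ρ * τ θ := by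
  obtain ⟨δ, hδ, hball⟩ := Metric.isOpen_iff.1 isOpen_interior y hy
  set v : ℝ × ℝ := (δ / 2 * Real.cos θ, δ / 2 * Real.sin θ) with hv
  have hvn : ‖v‖ < δ := by
    rw [hv, Prod.norm_def]
    refine max_lt ?_ ?_
    · rw [Real.norm_eq_abs, abs_mul]
      calc |δ / 2| * |Real.cos θ| ≤ |δ / 2| * 1 :=
          mul_le_mul_of_nonneg_left (Real.abs_cos_le_one θ) (abs_nonneg _)
        _ = δ / 2 := by rw [mul_one, abs_of_pos (by linarith)]
        _ < δ := by linarith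
    · rw [Real.norm_eq_abs, abs_mul]
      calc |δ / 2| * |Real.sin θ| ≤ |δ / 2| * 1 :=
          mul_le_mul_of_nonneg_left (Real.abs_sin_le_one θ) (abs_nonneg _)
        _ = δ / 2 := by rw [mul_one, abs_of_pos (by linarith)]
        _ < δ := by linarith
  have hmem : y + v ∈ wulff τ ρ := interior_subset (hball (by
    rw [Metric.mem_ball, dist_self_add_left]; exact hvn))
  have h := hmem θ
  simp only [Prod.fst_add, Prod.snd_add, hv] at h
  have hcs := Real.sin_sq_add_cos_sq θ
  nlinarith

end WulffAux

open WulffAux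

/-- A translate of the Wulff shape `W_{ρ₀}` fits in the annulus `W_{ρ₂} ∖ interior W_{ρ₁}`
if and only if `ρ₀ ≤ (ρ₂ - ρ₁) / 2`: the largest Wulff shapes that fit in the annulus have
size parameter `(ρ₂ - ρ₁) / 2`. -/
theorem wulff_fits_in_annulus_iff (τ : ℝ → ℝ) (hcont : Continuous τ)
    (hpos : ∀ θ : ℝ, 0 < τ θ) (hper : ∀ θ : ℝ, τ (θ + Real.pi) = τ θ)
    (ρ₀ ρ₁ ρ₂ : ℝ) (hρ₁ : 0 < ρ₁) (h₁₂ : ρ₁ < ρ₂) (hρ₀ : 0 < ρ₀) :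
    (∃ x : ℝ × ℝ, (x +ᵥ wulff τ ρ₀) ⊆ wulff τ ρ₂ ∧
        (x +ᵥ wulff τ ρ₀) ∩ interior (wulff τ ρ₁) = ∅)
      ↔ ρ₀ ≤ (ρ₂ - ρ₁) / 2 := by
  constructor
  · -- forward: fitting implies smallness
    rintro ⟨x, hsub, hdis⟩
    have hρ₂ : 0 < ρ₂ := hρ₁.trans h₁₂
    -- disjointness for Hahn-Banach
    have hdisj : Disjoint (interior (wulff τ ρ₁)) (x +ᵥ wulff τ ρ₀) := by
      rw [Set.disjoint_iff_inter_eq_empty, Set.inter_comm]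
      exact hdis
    obtain ⟨f, u, hfu, hfl⟩ := geometric_hahn_banach_open
      ((convex_wulff (τ := τ) (ρ := ρ₁)).interior) isOpen_interior
      ((convex_wulff (τ := τ) (ρ := ρ₀)).vadd x) hdisj
    have h0int := zero_mem_interior hcont hpos hper hρ₁
    have hu0 : 0 < u := by simpa using hfu 0 h0int
    have hxmem : x ∈ x +ᵥ wulff τ ρ₀ :=
      Set.mem_vadd_set.2 ⟨0, zero_mem hpos hρ₀.le, by simp⟩
    have hfx : u ≤ f x := hfl x hxmem
    -- maximizer of f on W₀
    obtain ⟨w, hwW, hwmax⟩ := (isCompact_wulff hpos hρ₀.le).exists_isMaxOn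
      ⟨0, zero_mem hpos hρ₀.le⟩ f.continuous.continuousOn
    -- f w > 0
    obtain ⟨m, hm0, hm⟩ := tau_lb hcont hpos hper
    have hfw : 0 < f w := by
      set t : ℝ := ρ₀ * m / (|x.1| + |x.2| + 1) with ht
      have habs : (0:ℝ) < |x.1| + |x.2| + 1 := by positivity
      have htpos : 0 < t := by positivity
      have htx : t • x ∈ wulff τ ρ₀ := by
        refine mem_wulff_of_abs hρ₀.le hm ?_
        simp only [Prod.smul_fst, Prod.smul_snd, smul_eq_mul, abs_mul, abs_of_pos htpos]
        rw [ht, div_mul_eq_mul_div, div_mul_eq_mul_div, ← add_div, div_le_iff₀ habs]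
        nlinarith [abs_nonneg x.1, abs_nonneg x.2]
      have hle : f (t • x) ≤ f w := hwmax htx
      simp only [map_smul, smul_eq_mul] at hle
      have hfxpos : 0 < f x := lt_of_lt_of_le hu0 hfx
      calc (0:ℝ) < t * f x := by positivity
        _ ≤ f w := hle
    -- (i) u ≤ f x - f w
    have hi : u ≤ f x - f w := by
      have hmem : x + -w ∈ x +ᵥ wulff τ ρ₀ :=
        Set.mem_vadd_set.2 ⟨-w, neg_mem hper hwW, rfl⟩
      have := hfl _ hmem
      simpa [map_add, map_neg, sub_eq_add_neg] using this
    -- (ii) ρ₀ * (f x + f w) ≤ ρ₂ * f w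
    have hii : ρ₀ * (f x + f w) ≤ ρ₂ * f w := by
      have hxw : x + w ∈ wulff τ ρ₂ := hsub (Set.mem_vadd_set.2 ⟨w, hwW, rfl⟩)
      have hz : (ρ₀ / ρ₂) • (x + w) ∈ wulff τ ρ₀ := smul_mem hρ₂ hρ₀.le hxw
      have hle : f ((ρ₀ / ρ₂) • (x + w)) ≤ f w := hwmax hz
      have hle' : ρ₀ / ρ₂ * (f x + f w) ≤ f w := by
        simpa only [map_smul, map_add, smul_eq_mul] using hle
      rw [div_mul_eq_mul_div, div_le_iff₀ hρ₂] at hle'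
      linarith
    -- (iii) ρ₁ * f w ≤ ρ₀ * u
    have hiii : ρ₁ * f w ≤ ρ₀ * u := by
      by_contra hcon
      push_neg at hcon
      have hd : (0:ℝ) < ρ₁ * f w := mul_pos hρ₁ hfw
      set t : ℝ := (ρ₀ * u + ρ₁ * f w) / (2 * (ρ₁ * f w)) with htdef
      have hnum : (0:ℝ) < ρ₀ * u + ρ₁ * f w := by positivity
      have ht0 : 0 < t := by positivity
      have ht1 : t < 1 := by
        rw [htdef, div_lt_one (by positivity)]
        linarith
      have hq : (ρ₁ / ρ₀) • w ∈ wulff τ ρ₁ := smul_mem hρ₀ hρ₁.le hwW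
      have hint : (1 - t) • (0 : ℝ × ℝ) + t • ((ρ₁ / ρ₀) • w) ∈ interior (wulff τ ρ₁) :=
        (convex_wulff (τ := τ) (ρ := ρ₁)).combo_interior_self_mem_interior h0int hq
          (by linarith) ht0.le (by ring)
      rw [smul_zero, zero_add] at hint
      have hlt : f (t • (ρ₁ / ρ₀) • w) < u := hfu _ hint
      have hlt' : t * (ρ₁ / ρ₀ * f w) < u := by
        simpa only [map_smul, smul_eq_mul] using hlt
      have key : t * (ρ₁ / ρ₀ * f w) = (ρ₀ * u + ρ₁ * f w) / (2 * ρ₀) := by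
        rw [htdef]
        field_simp
      rw [key, div_lt_iff₀ (by positivity)] at hlt'
      nlinarith
    nlinarith [hfw, hi, hii, hiii, mul_le_mul_of_nonneg_left hi hρ₀.le]
  · -- reverse: construction
    intro h
    have hρ₂ : 0 < ρ₂ := hρ₁.trans h₁₂
    set s : ℝ := ρ₂ - ρ₀ with hs
    have hs0 : 0 < s := by rw [hs]; linarith
    obtain ⟨x, hxW, hxmax⟩ := (isCompact_wulff hpos hs0.le (τ := τ)).exists_isMaxOn
      ⟨0, zero_mem hpos hs0.le⟩ continuous_fst.continuousOn
    -- there is an active constraint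
    have hactive : ∃ θ₀ : ℝ, x.1 * Real.cos θ₀ + x.2 * Real.sin θ₀ = s * τ θ₀ := by
      by_contra hno
      push_neg at hno
      set g : ℝ → ℝ := fun θ => s * τ θ - (x.1 * Real.cos θ + x.2 * Real.sin θ) with hg
      have hgc : Continuous g := by
        apply Continuous.sub (continuous_const.mul hcont)
        exact (continuous_const.mul Real.continuous_cos).add
          (continuous_const.mul Real.continuous_sin)
      have hgp : Function.Periodic g (2 * Real.pi) := by
        intro θ
        have hτ : τ (θ + 2 * Real.pi) = τ θ := by
          have : θ + 2 * Real.pi = θ + Real.pi + Real.pi := by ring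
          rw [this, hper, hper]
        simp only [hg, Real.cos_add_two_pi, Real.sin_add_two_pi, hτ]
      have hgpos : ∀ θ, 0 < g θ := fun θ => sub_pos.2 (lt_of_le_of_ne (hxW θ) (hno θ))
      obtain ⟨ε, hε0, hε⟩ := exists_pos_lb (by positivity) hgc hgp hgpos
      have hx' : x + (ε, 0) ∈ wulff τ s := by
        intro θ
        have h1 := hε θ
        have h2 : ε * Real.cos θ ≤ ε := by
          nlinarith [Real.cos_le_one θ, Real.neg_one_le_cos θ]
        simp only [Prod.fst_add, Prod.snd_add, add_zero]
        simp only [hg] at h1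
        nlinarith
      have hle : (x + (ε, 0)).1 ≤ x.1 := hxmax hx'
      simp only [Prod.fst_add] at hle
      linarith
    obtain ⟨θ₀, hθ₀⟩ := hactive
    refine ⟨x, ?_, ?_⟩
    · -- containment
      intro y hy
      rw [Set.mem_vadd_set] at hy
      obtain ⟨w, hw, rfl⟩ := hy
      intro θ
      have h1 := hxW θ
      have h2 := hw θ
      simp only [vadd_eq_add, Prod.fst_add, Prod.snd_add]
      have : s * τ θ + ρ₀ * τ θ = ρ₂ * τ θ := by rw [hs]; ring
      nlinarith
    · -- disjointness
      rw [Set.eq_empty_iff_forall_notMem]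
      rintro y ⟨hy1, hy2⟩
      rw [Set.mem_vadd_set] at hy1
      obtain ⟨w, hw, rfl⟩ := hy1
      have hlt := lt_of_mem_interior hy2 θ₀
      have hlow := neg_mem hper hw θ₀
      simp only [Prod.fst_neg, Prod.snd_neg, vadd_eq_add, Prod.fst_add, Prod.snd_add] at hlow hlt ⊢
      have hτ0 := hpos θ₀
      -- x dot u(θ₀) = s τ θ₀, w dot ≥ -ρ₀ τ θ₀, so sum ≥ (s - ρ₀) τθ₀ ≥ ρ₁ τθ₀
      have hge : ρ₁ * τ θ₀ ≤ (x.1 + w.1) * Real.cos θ₀ + (x.2 + w.2) * Real.sin θ₀ := by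
        have h1 : (x.1 + w.1) * Real.cos θ₀ + (x.2 + w.2) * Real.sin θ₀
            = (x.1 * Real.cos θ₀ + x.2 * Real.sin θ₀)
              + (w.1 * Real.cos θ₀ + w.2 * Real.sin θ₀) := by ring
        rw [h1, hθ₀]
        nlinarith
      linarith
end

section
/- Let τ : ℝ → ℝ be continuous, positive and π-periodic, and for ρ > 0 let W_ρ = {x ∈ ℝ² : ∀ θ ∈ ℝ, x • (cos θ, sin θ) ≤ ρ·τ(θ)}. Let ρ > 0, d > 0, θ ∈ ℝ, and set n = (cos θ, sin θ). Suppose x, x', y ∈ ℝ² satisfy: y − x ∈ W_ρ with (y − x) • n = ρ·τ(θ), and x − x' ∈ W_d with (x − x') • n = d·τ(θ). Then y ∈ (x + W_ρ) ∩ (x' + W_{ρ+d}), and every z ∈ (x + W_ρ) ∪ (x' + W_{ρ+d}) satisfies (z − y) • n ≤ 0. -/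
open Real Set
open scoped Pointwise

/-- Common tangent property: if `n = (cos θ, sin θ)` is the external normal to `x + W_ρ`
at `y`, and `x'` is placed so that `n` is also the external normal to `x' + W_d` at `x`,
then the Wulff shapes `x + W_ρ` and `x' + W_{ρ+d}` touch at `y` and both lie on the same
side of the common tangent line through `y` with normal `n`. -/
theorem wulff_common_tangent (τ : ℝ → ℝ) (hcont : Continuous τ)
    (hpos : ∀ θ' : ℝ, 0 < τ θ') (hper : ∀ θ' : ℝ, τ (θ' + Real.pi) = τ θ')
    (ρ d θ : ℝ) (hρ : 0 < ρ) (hd : 0 < d) (x x' y : ℝ × ℝ)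
    (hy : y - x ∈ wulff τ ρ)
    (hy' : (y - x).1 * Real.cos θ + (y - x).2 * Real.sin θ = ρ * τ θ)
    (hx : x - x' ∈ wulff τ d)
    (hx' : (x - x').1 * Real.cos θ + (x - x').2 * Real.sin θ = d * τ θ) :
    y ∈ (x +ᵥ wulff τ ρ) ∩ (x' +ᵥ wulff τ (ρ + d)) ∧
      ∀ z ∈ (x +ᵥ wulff τ ρ) ∪ (x' +ᵥ wulff τ (ρ + d)),
        (z - y).1 * Real.cos θ + (z - y).2 * Real.sin θ ≤ 0 := by
  have hmem : ∀ (a : ℝ × ℝ) (S : Set (ℝ × ℝ)) (z : ℝ × ℝ), z ∈ a +ᵥ S ↔ z - a ∈ S := by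
    intro a S z
    rw [Set.mem_vadd_set_iff_neg_vadd_mem]
    simp [sub_eq_neg_add, vadd_eq_add]
  constructor
  · constructor
    · rw [hmem]; exact hy
    · rw [hmem]
      intro φ
      have h1 := hy φ
      have h2 := hx φ
      have : y - x' = (y - x) + (x - x') := by abel
      rw [this]
      simp only [Prod.fst_add, Prod.snd_add]
      nlinarith [h1, h2]
  · intro z hz
    rcases hz with hz | hz
    · rw [hmem] at hz
      have h1 := hz θ
      have : z - y = (z - x) - (y - x) := by abel
      rw [this]
      simp only [Prod.fst_sub, Prod.snd_sub] at h1 hy' ⊢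
      nlinarith [h1, hy']
    · rw [hmem] at hz
      have h1 := hz θ
      have : z - y = (z - x') - (y - x) - (x - x') := by abel
      rw [this]
      simp only [Prod.fst_sub, Prod.snd_sub] at h1 hy' hx' ⊢
      nlinarith [h1, hy', hx']
end

section
/- Let τ : ℝ → ℝ be continuous, positive and π-periodic, and suppose τ satisfies the triangle inequality: for all x, y, z ∈ ℝ² forming a nondegenerate triangle, if n_z = (cos θ_z, sin θ_z), n_x = (cos θ_x, sin θ_x) and n_y = (cos θ_y, sin θ_y) denote the outward unit normals of the triangle xyz to the sides [x,y], [y,z] and [z,x] respectively, then ‖x−z‖·τ(θ_y) ≤ ‖x−y‖·τ(θ_z) + ‖y−z‖·τ(θ_x) (with ‖·‖ the Euclidean norm). Then for every ρ > 0 and every θ ∈ ℝ, the maximum of x • (cos θ, sin θ) over x ∈ W_ρ equals ρ·τ(θ); that is, ρτ is the support function of the Wulff shape W_ρ. -/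
open Real Set

/-- The Euclidean norm on the plane `ℝ × ℝ`. -/
noncomputable def enorm2 (v : ℝ × ℝ) : ℝ := Real.sqrt (v.1 ^ 2 + v.2 ^ 2)


-- arg of a pair
noncomputable def parg (v : ℝ × ℝ) : ℝ := Complex.arg ⟨v.1, v.2⟩

lemma cabs_eq (v : ℝ × ℝ) : ‖(⟨v.1, v.2⟩ : ℂ)‖ = enorm2 v := by
  rw [Complex.norm_def, Complex.normSq_apply, enorm2]
  ring_nf

lemma enorm2_nonneg (v : ℝ × ℝ) : 0 ≤ enorm2 v := Real.sqrt_nonneg _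

lemma enorm2_pos {v : ℝ × ℝ} (hv : v ≠ 0) : 0 < enorm2 v := by
  rw [← cabs_eq]
  apply norm_pos_iff.mpr
  intro h
  rw [Complex.ext_iff] at h
  exact hv (Prod.ext h.1 h.2)

lemma cos_parg {v : ℝ × ℝ} (hv : v ≠ 0) : Real.cos (parg v) = v.1 / enorm2 v := by
  rw [parg, Complex.cos_arg, cabs_eq]
  simp only [ne_eq, Complex.ext_iff, Complex.zero_re, Complex.zero_im]
  intro h
  exact hv (Prod.ext h.1 h.2)

lemma sin_parg (v : ℝ × ℝ) : Real.sin (parg v) = v.2 / enorm2 v := by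
  rw [parg, Complex.sin_arg, cabs_eq]

section tau
variable {τ : ℝ → ℝ} (hper : ∀ θ : ℝ, τ (θ + Real.pi) = τ θ)
include hper

lemma tau_int_two_pi (b : ℝ) (n : ℤ) : τ (b + n * (2 * Real.pi)) = τ b := by
  have h : Function.Periodic τ Real.pi := hper
  have h2 := (h.int_mul (2 * n)) b
  convert h2 using 2
  push_cast
  ring

lemma tau_eq_of_cs (a b : ℝ) (h1 : Real.cos a = Real.cos b) (h2 : Real.sin a = Real.sin b) :
    τ a = τ b := by
  have he : Complex.exp (a * Complex.I) = Complex.exp (b * Complex.I) := by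
    rw [Complex.exp_mul_I, Complex.exp_mul_I]
    rw [Complex.ext_iff]
    constructor <;> simp [Complex.cos_ofReal_re, Complex.sin_ofReal_re, ← Complex.ofReal_cos,
      ← Complex.ofReal_sin, h1, h2]
  rw [Complex.exp_eq_exp_iff_exists_int] at he
  obtain ⟨n, hn⟩ := he
  have h3 : ((a : ℂ)) * Complex.I = ((b + n * (2 * Real.pi) : ℝ) : ℂ) * Complex.I := by
    push_cast
    linear_combination hn
  have h4 := mul_right_cancel₀ Complex.I_ne_zero h3
  have ha : a = b + n * (2 * Real.pi) := by exact_mod_cast h4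
  rw [ha, tau_int_two_pi hper]

lemma tau_eq_of_neg_cs (a b : ℝ) (h1 : Real.cos a = -Real.cos b) (h2 : Real.sin a = -Real.sin b) :
    τ a = τ b := by
  have := tau_eq_of_cs hper a (b + Real.pi) (by rw [Real.cos_add_pi, h1]) (by rw [Real.sin_add_pi, h2])
  rw [this, hper]

end tau

noncomputable def hdir (τ : ℝ → ℝ) (v : ℝ × ℝ) : ℝ := enorm2 v * τ (parg v)

section hdir
variable {τ : ℝ → ℝ} (hpos : ∀ θ : ℝ, 0 < τ θ) (hper : ∀ θ : ℝ, τ (θ + Real.pi) = τ θ)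

lemma enorm2_zero : enorm2 (0 : ℝ × ℝ) = 0 := by simp [enorm2]

lemma hdir_zero : hdir τ (0 : ℝ × ℝ) = 0 := by simp [hdir, enorm2_zero]

lemma enorm2_smul (t : ℝ) (v : ℝ × ℝ) : enorm2 (t • v) = |t| * enorm2 v := by
  rw [enorm2, enorm2, Prod.smul_fst, Prod.smul_def]
  simp only [smul_eq_mul]
  rw [show (t * v.1) ^ 2 + (t * v.2) ^ 2 = t ^ 2 * (v.1 ^ 2 + v.2 ^ 2) by ring,
    Real.sqrt_mul (sq_nonneg t), Real.sqrt_sq_eq_abs]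

include hper

lemma hdir_neg (v : ℝ × ℝ) : hdir τ (-v) = hdir τ v := by
  rcases eq_or_ne v 0 with rfl | hv
  · simp
  have hnv : -v ≠ 0 := neg_ne_zero.mpr hv
  have hen : enorm2 (-v) = enorm2 v := by
    have := enorm2_smul (-1) v; simpa using this
  rw [hdir, hdir, hen]
  congr 1
  apply tau_eq_of_neg_cs hper
  · rw [cos_parg hnv, cos_parg hv, hen]
    have : (-v).1 = -v.1 := rfl
    rw [this, neg_div]
  · rw [sin_parg, sin_parg, hen]
    have : (-v).2 = -v.2 := rfl
    rw [this, neg_div]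

lemma hdir_smul (t : ℝ) (v : ℝ × ℝ) : hdir τ (t • v) = |t| * hdir τ v := by
  rcases eq_or_ne v 0 with rfl | hv
  · simp [hdir_zero]
  rcases lt_trichotomy t 0 with ht | rfl | ht
  · have h1 : t • v = -((-t) • v) := by simp
    rw [h1, hdir_neg hper, hdir, hdir, enorm2_smul]
    have hvt : (-t) • v ≠ 0 := smul_ne_zero (by linarith) hv
    have key : τ (parg ((-t) • v)) = τ (parg v) := by
      apply tau_eq_of_cs hper
      · rw [cos_parg hvt, cos_parg hv, enorm2_smul, Prod.smul_fst, smul_eq_mul]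
        rw [abs_of_pos (by linarith : (0:ℝ) < -t), mul_div_mul_left _ _ (by linarith : (-t) ≠ 0)]
      · rw [sin_parg, sin_parg, enorm2_smul, Prod.smul_snd, smul_eq_mul]
        rw [abs_of_pos (by linarith : (0:ℝ) < -t), mul_div_mul_left _ _ (by linarith : (-t) ≠ 0)]
    rw [key]
    rw [abs_of_pos (by linarith : (0:ℝ) < -t), abs_of_neg ht]
    ring
  · simp [hdir_zero]
  · have hvt : t • v ≠ 0 := smul_ne_zero (ne_of_gt ht) hv
    rw [hdir, hdir, enorm2_smul]
    have key : τ (parg (t • v)) = τ (parg v) := by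
      apply tau_eq_of_cs hper
      · rw [cos_parg hvt, cos_parg hv, enorm2_smul, Prod.smul_fst, smul_eq_mul]
        rw [abs_of_pos ht, mul_div_mul_left _ _ (ne_of_gt ht)]
      · rw [sin_parg, sin_parg, enorm2_smul, Prod.smul_snd, smul_eq_mul]
        rw [abs_of_pos ht, mul_div_mul_left _ _ (ne_of_gt ht)]
    rw [key, abs_of_pos ht]
    ring

include hpos

lemma hdir_nonneg (v : ℝ × ℝ) : 0 ≤ hdir τ v :=
  mul_nonneg (enorm2_nonneg v) (le_of_lt (hpos _))

end hdir

lemma tau_parg_neg {τ : ℝ → ℝ} (hper : ∀ θ : ℝ, τ (θ + Real.pi) = τ θ)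
    {v : ℝ × ℝ} (hv : v ≠ 0) : τ (parg (-v)) = τ (parg v) := by
  have hnv : -v ≠ 0 := neg_ne_zero.mpr hv
  have hen : enorm2 (-v) = enorm2 v := by
    have := enorm2_smul (-1) v; simpa using this
  apply tau_eq_of_neg_cs hper
  · rw [cos_parg hnv, cos_parg hv, hen]
    have : (-v).1 = -v.1 := rfl
    rw [this, neg_div]
  · rw [sin_parg, sin_parg, hen]
    have : (-v).2 = -v.2 := rfl
    rw [this, neg_div]

section key
variable {τ : ℝ → ℝ} (hpos : ∀ θ : ℝ, 0 < τ θ) (hper : ∀ θ : ℝ, τ (θ + Real.pi) = τ θ)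
  (htri : ∀ (x y z : ℝ × ℝ) (θx θy θz : ℝ),
      ¬ Collinear ℝ ({x, y, z} : Set (ℝ × ℝ)) →
      (y - x).1 * Real.cos θz + (y - x).2 * Real.sin θz = 0 →
      (z - x).1 * Real.cos θz + (z - x).2 * Real.sin θz < 0 →
      (z - y).1 * Real.cos θx + (z - y).2 * Real.sin θx = 0 →
      (x - y).1 * Real.cos θx + (x - y).2 * Real.sin θx < 0 →
      (x - z).1 * Real.cos θy + (x - z).2 * Real.sin θy = 0 →
      (y - z).1 * Real.cos θy + (y - z).2 * Real.sin θy < 0 →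
      enorm2 (x - z) * τ θy ≤ enorm2 (x - y) * τ θz + enorm2 (y - z) * τ θx)
include hpos hper htri

lemma key_cross_pos (u1 u2 : ℝ × ℝ) (hc : 0 < u1.1 * u2.2 - u1.2 * u2.1) :
    hdir τ (u1 + u2) ≤ hdir τ u1 + hdir τ u2 := by
  have hu1 : u1 ≠ 0 := by
    rintro rfl; simp at hc
  have hu2 : u2 ≠ 0 := by
    rintro rfl; simp at hc
  have hu3 : u1 + u2 ≠ 0 := by
    intro h
    have h1 : u1.1 + u2.1 = 0 := congrArg Prod.fst h
    have h2 : u1.2 + u2.2 = 0 := congrArg Prod.snd h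
    have e1 : u2.1 = -u1.1 := by linarith
    have e2 : u2.2 = -u1.2 := by linarith
    rw [e1, e2] at hc
    nlinarith
  have n1pos : 0 < enorm2 u1 := enorm2_pos hu1
  have n2pos : 0 < enorm2 u2 := enorm2_pos hu2
  have n3pos : 0 < enorm2 (u1 + u2) := enorm2_pos hu3
  have hn3 : -(u1 + u2) ≠ 0 := neg_ne_zero.mpr hu3
  have hen3 : enorm2 (-(u1+u2)) = enorm2 (u1+u2) := by
    have := enorm2_smul (-1) (u1+u2)
    rw [neg_one_smul] at this
    simpa using this
  set v : ℝ × ℝ := (u1.2, -u1.1) with hv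
  set w : ℝ × ℝ := (u2.2, -u2.1) with hw
  have hcz : Real.cos (parg u1) = u1.1 / enorm2 u1 := cos_parg hu1
  have hsz : Real.sin (parg u1) = u1.2 / enorm2 u1 := sin_parg u1
  have hcx : Real.cos (parg u2) = u2.1 / enorm2 u2 := cos_parg hu2
  have hsx : Real.sin (parg u2) = u2.2 / enorm2 u2 := sin_parg u2
  have hfst : (-(u1+u2)).1 = -(u1.1 + u2.1) := rfl
  have hsnd : (-(u1+u2)).2 = -(u1.2 + u2.2) := rfl
  have hcy : Real.cos (parg (-(u1+u2))) = -(u1.1 + u2.1) / enorm2 (u1+u2) := by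
    rw [cos_parg hn3, hen3, hfst]
  have hsy : Real.sin (parg (-(u1+u2))) = -(u1.2 + u2.2) / enorm2 (u1+u2) := by
    rw [sin_parg, hen3, hsnd]
  have n1ne := ne_of_gt n1pos
  have n2ne := ne_of_gt n2pos
  have n3ne := ne_of_gt n3pos
  have H := htri (v + w) w 0 (parg u2) (parg (-(u1+u2))) (parg u1) ?_ ?_ ?_ ?_ ?_ ?_ ?_
  · -- convert conclusion
    have e1 : enorm2 (v + w - 0) = enorm2 (u1 + u2) := by
      rw [sub_zero, enorm2, enorm2]
      congr 1
      show (u1.2 + u2.2) ^ 2 + (-u1.1 + -u2.1) ^ 2 = (u1.1 + u2.1) ^ 2 + (u1.2 + u2.2) ^ 2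
      ring
    have e2 : enorm2 (v + w - w) = enorm2 u1 := by
      rw [add_sub_cancel_right, enorm2, enorm2]
      congr 1
      show u1.2 ^ 2 + (-u1.1) ^ 2 = u1.1 ^ 2 + u1.2 ^ 2
      ring
    have e3 : enorm2 (w - 0) = enorm2 u2 := by
      rw [sub_zero, enorm2, enorm2]
      congr 1
      show u2.2 ^ 2 + (-u2.1) ^ 2 = u2.1 ^ 2 + u2.2 ^ 2
      ring
    rw [e1, e2, e3, tau_parg_neg hper hu3] at H
    exact H
  · -- noncollinear
    intro hcol
    have h0 : (0 : ℝ × ℝ) ∈ ({v + w, w, 0} : Set (ℝ × ℝ)) := by simp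
    obtain ⟨d, hd⟩ := (collinear_iff_of_mem h0).1 hcol
    obtain ⟨t1, ht1⟩ := hd (v + w) (by simp)
    obtain ⟨t2, ht2⟩ := hd w (by simp)
    simp only [vadd_eq_add, add_zero] at ht1 ht2
    have e11 : u1.2 + u2.2 = t1 * d.1 := congrArg Prod.fst ht1
    have e12 : -u1.1 + -u2.1 = t1 * d.2 := congrArg Prod.snd ht1
    have e21 : u2.2 = t2 * d.1 := congrArg Prod.fst ht2
    have e22 : -u2.1 = t2 * d.2 := congrArg Prod.snd ht2
    have hzero : u1.1 * u2.2 - u1.2 * u2.1 = 0 := by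
      linear_combination (-u2.2) * e12 + (-u2.1) * e11 + (-(t1 * d.2)) * e21 + (t1 * d.1) * e22
    linarith
  · -- n_θz ⊥ (w - (v+w))
    rw [hcz, hsz]
    have h1 : (w - (v + w)).1 = u2.2 - (u1.2 + u2.2) := rfl
    have h2 : (w - (v + w)).2 = -u2.1 - (-u1.1 + -u2.1) := rfl
    rw [h1, h2]
    field_simp
    ring
  · -- outward θz : (0 - (v+w)) • n < 0
    rw [hcz, hsz]
    have h1 : ((0 : ℝ × ℝ) - (v + w)).1 = 0 - (u1.2 + u2.2) := rfl
    have h2 : ((0 : ℝ × ℝ) - (v + w)).2 = 0 - (-u1.1 + -u2.1) := rfl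
    rw [h1, h2]
    have hval : (0 - (u1.2 + u2.2)) * (u1.1 / enorm2 u1) + (0 - (-u1.1 + -u2.1)) * (u1.2 / enorm2 u1)
        = (-(u1.1 * u2.2 - u1.2 * u2.1)) / enorm2 u1 := by
      field_simp
      ring
    rw [hval]
    exact div_neg_of_neg_of_pos (by linarith) n1pos
  · -- n_θx ⊥ (0 - w)
    rw [hcx, hsx]
    have h1 : ((0 : ℝ × ℝ) - w).1 = 0 - u2.2 := rfl
    have h2 : ((0 : ℝ × ℝ) - w).2 = 0 - (-u2.1) := rfl
    rw [h1, h2]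
    field_simp
    ring
  · -- outward θx : (v+w - w) • n < 0
    rw [hcx, hsx]
    have h1 : (v + w - w).1 = u1.2 + u2.2 - u2.2 := rfl
    have h2 : (v + w - w).2 = -u1.1 + -u2.1 - (-u2.1) := rfl
    rw [h1, h2]
    have hval : (u1.2 + u2.2 - u2.2) * (u2.1 / enorm2 u2) + (-u1.1 + -u2.1 - -u2.1) * (u2.2 / enorm2 u2)
        = (-(u1.1 * u2.2 - u1.2 * u2.1)) / enorm2 u2 := by
      field_simp
      ring
    rw [hval]
    exact div_neg_of_neg_of_pos (by linarith) n2pos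
  · -- n_θy ⊥ (v+w - 0)
    rw [hcy, hsy]
    have h1 : (v + w - 0).1 = u1.2 + u2.2 - 0 := rfl
    have h2 : (v + w - 0).2 = -u1.1 + -u2.1 - 0 := rfl
    rw [h1, h2]
    field_simp
    ring
  · -- outward θy : (w - 0) • n < 0
    rw [hcy, hsy]
    have h1 : (w - (0 : ℝ × ℝ)).1 = u2.2 - 0 := rfl
    have h2 : (w - (0 : ℝ × ℝ)).2 = -u2.1 - 0 := rfl
    rw [h1, h2]
    have hval : (u2.2 - 0) * (-(u1.1 + u2.1) / enorm2 (u1 + u2)) + (-u2.1 - 0) * (-(u1.2 + u2.2) / enorm2 (u1 + u2))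
        = (-(u1.1 * u2.2 - u1.2 * u2.1)) / enorm2 (u1 + u2) := by
      field_simp
      ring
    rw [hval]
    exact div_neg_of_neg_of_pos (by linarith) n3pos

lemma hdir_subadd (u1 u2 : ℝ × ℝ) :
    hdir τ (u1 + u2) ≤ hdir τ u1 + hdir τ u2 := by
  rcases lt_trichotomy (u1.1 * u2.2 - u1.2 * u2.1) 0 with h | h | h
  · have := key_cross_pos hpos hper htri u2 u1 (by linarith)
    rw [add_comm] at this
    linarith
  · -- parallel case
    rcases eq_or_ne u1 0 with rfl | hu1
    · simp only [zero_add, hdir_zero]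
      have := hdir_nonneg hpos hper u2
      linarith [hdir_nonneg hpos hper u2]
    · obtain ⟨t, ht⟩ : ∃ t : ℝ, u2 = t • u1 := by
        rcases eq_or_ne u1.1 0 with h1 | h1
        · have h2 : u1.2 ≠ 0 := by
            intro h2
            exact hu1 (Prod.ext h1 h2)
          refine ⟨u2.2 / u1.2, ?_⟩
          have : u2.1 = 0 := by
            have : u1.2 * u2.1 = 0 := by rw [h1] at h; linarith
            rcases mul_eq_zero.1 this with h' | h'
            · exact absurd h' h2
            · exact h'
          apply Prod.ext
          · simp [this, h1, Prod.smul_fst]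
          · simp [Prod.smul_snd]
            field_simp
        · refine ⟨u2.1 / u1.1, ?_⟩
          apply Prod.ext
          · simp [Prod.smul_fst]
            field_simp
          · simp [Prod.smul_snd]
            field_simp
            nlinarith [h]
      have hsum : u1 + u2 = (1 + t) • u1 := by
        rw [ht, add_smul, one_smul]
      rw [hsum, ht, hdir_smul hper, hdir_smul hper]
      have hnn : 0 ≤ hdir τ u1 := hdir_nonneg hpos hper u1
      have habs : |1 + t| ≤ 1 + |t| := by
        calc |1 + t| ≤ |(1:ℝ)| + |t| := abs_add_le 1 t
        _ = 1 + |t| := by rw [abs_one]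
      nlinarith
  · exact key_cross_pos hpos hper htri u1 u2 h

end key

lemma hdir_unit {τ : ℝ → ℝ} (hper : ∀ θ : ℝ, τ (θ + Real.pi) = τ θ) (θ' : ℝ) :
    hdir τ (Real.cos θ', Real.sin θ') = τ θ' := by
  have hne : ((Real.cos θ', Real.sin θ') : ℝ × ℝ) ≠ 0 := by
    intro h
    have h1 : Real.cos θ' = 0 := congrArg Prod.fst h
    have h2 : Real.sin θ' = 0 := congrArg Prod.snd h
    nlinarith [Real.sin_sq_add_cos_sq θ']
  have hen : enorm2 (Real.cos θ', Real.sin θ') = 1 := by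
    rw [enorm2]
    show Real.sqrt (Real.cos θ' ^ 2 + Real.sin θ' ^ 2) = 1
    rw [Real.cos_sq_add_sin_sq, Real.sqrt_one]
  rw [hdir, hen, one_mul]
  apply tau_eq_of_cs hper
  · rw [cos_parg hne, hen]
    show Real.cos θ' / 1 = Real.cos θ'
    rw [div_one]
  · rw [sin_parg, hen]
    show Real.sin θ' / 1 = Real.sin θ'
    rw [div_one]

/-- If the surface tension `τ` is continuous, positive, `π`-periodic and satisfies the
triangle inequality (for any nondegenerate triangle `xyz` with outward unit normals
`n_z = (cos θ_z, sin θ_z)`, `n_x`, `n_y` to the sides `[x,y]`, `[y,z]`, `[z,x]`, one has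
`‖x−z‖·τ(θ_y) ≤ ‖x−y‖·τ(θ_z) + ‖y−z‖·τ(θ_x)`), then `ρτ` is the support function of the
Wulff shape `W_ρ`: for every direction `θ`, the maximum over `W_ρ` of
`x ↦ x • (cos θ, sin θ)` is attained and equals `ρ·τ(θ)`. -/
theorem wulff_support_function (τ : ℝ → ℝ) (hcont : Continuous τ)
    (hpos : ∀ θ : ℝ, 0 < τ θ) (hper : ∀ θ : ℝ, τ (θ + Real.pi) = τ θ)
    (htri : ∀ (x y z : ℝ × ℝ) (θx θy θz : ℝ),
      ¬ Collinear ℝ ({x, y, z} : Set (ℝ × ℝ)) →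
      -- `n_z = (cos θz, sin θz)` is the outward unit normal to the side `[x, y]`
      (y - x).1 * Real.cos θz + (y - x).2 * Real.sin θz = 0 →
      (z - x).1 * Real.cos θz + (z - x).2 * Real.sin θz < 0 →
      -- `n_x = (cos θx, sin θx)` is the outward unit normal to the side `[y, z]`
      (z - y).1 * Real.cos θx + (z - y).2 * Real.sin θx = 0 →
      (x - y).1 * Real.cos θx + (x - y).2 * Real.sin θx < 0 →
      -- `n_y = (cos θy, sin θy)` is the outward unit normal to the side `[z, x]`
      (x - z).1 * Real.cos θy + (x - z).2 * Real.sin θy = 0 →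
      (y - z).1 * Real.cos θy + (y - z).2 * Real.sin θy < 0 →
      enorm2 (x - z) * τ θy ≤ enorm2 (x - y) * τ θz + enorm2 (y - z) * τ θx)
    (ρ : ℝ) (hρ : 0 < ρ) (θ : ℝ) :
    IsGreatest ((fun x : ℝ × ℝ => x.1 * Real.cos θ + x.2 * Real.sin θ) '' wulff τ ρ)
      (ρ * τ θ) := by
  constructor
  · -- the max is attained
    set nθ : ℝ × ℝ := (Real.cos θ, Real.sin θ) with hnθdef
    have hnθ : nθ ≠ 0 := by
      intro h
      have h1 : Real.cos θ = 0 := congrArg Prod.fst h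
      have h2 : Real.sin θ = 0 := congrArg Prod.snd h
      nlinarith [Real.sin_sq_add_cos_sq θ]
    set N : (ℝ × ℝ) → ℝ := fun u => ρ * hdir τ u with hNdef
    have N_hom : ∀ c : ℝ, 0 < c → ∀ x, N (c • x) = c * N x := by
      intro c hc x
      simp only [hNdef, hdir_smul hper, abs_of_pos hc]
      ring
    have N_add : ∀ x y, N (x + y) ≤ N x + N y := by
      intro x y
      simp only [hNdef]
      have := hdir_subadd hpos hper htri x y
      nlinarith
    set f := (LinearPMap.mkSpanSingleton (K := ℝ) nθ (ρ * τ θ) hnθ : (ℝ × ℝ) →ₗ.[ℝ] ℝ) with hfdef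
    have hf : ∀ x : f.domain, f x ≤ N x := by
      rintro ⟨x, hx⟩
      obtain ⟨a, ha⟩ := Submodule.mem_span_singleton.1 hx
      have hfx : f ⟨x, hx⟩ = a * (ρ * τ θ) := by
        have : f ⟨a • nθ, ha ▸ hx⟩ = a • (ρ * τ θ) := LinearPMap.mkSpanSingleton'_apply _ _ _ a _
        rw [smul_eq_mul] at this
        rw [← this]
        congr 1
        exact Subtype.ext ha.symm
      rw [hfx]
      have hxval : (⟨x, hx⟩ : f.domain).1 = a • nθ := ha.symm
      show a * (ρ * τ θ) ≤ N (⟨x, hx⟩ : f.domain).1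
      rw [hxval, hNdef]
      simp only [hdir_smul hper]
      rw [hnθdef, hdir_unit hper]
      have h1 : a ≤ |a| := le_abs_self a
      have h2 : 0 < τ θ := hpos θ
      have h3 := mul_le_mul_of_nonneg_left h1 (le_of_lt (mul_pos hρ h2))
      nlinarith
    obtain ⟨g, hg_ext, hg_le⟩ := exists_extension_of_le_sublinear f N N_hom N_add hf
    set x₀ : ℝ × ℝ := (g (1, 0), g (0, 1)) with hx₀
    have glin : ∀ u : ℝ × ℝ, x₀.1 * u.1 + x₀.2 * u.2 = g u := by
      intro u
      have hu : u = u.1 • ((1 : ℝ), (0 : ℝ)) + u.2 • ((0 : ℝ), (1 : ℝ)) := by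
        apply Prod.ext <;> simp
      rw [hx₀]
      conv_rhs => rw [hu]
      rw [map_add, map_smul, map_smul, smul_eq_mul, smul_eq_mul]
      show g (1, 0) * u.1 + g (0, 1) * u.2 = _
      ring
    refine ⟨x₀, ?_, ?_⟩
    · intro θ'
      rw [show x₀.1 * Real.cos θ' + x₀.2 * Real.sin θ'
            = x₀.1 * ((Real.cos θ', Real.sin θ') : ℝ × ℝ).1
              + x₀.2 * ((Real.cos θ', Real.sin θ') : ℝ × ℝ).2 from rfl, glin]
      calc g (Real.cos θ', Real.sin θ') ≤ N (Real.cos θ', Real.sin θ') := hg_le _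
        _ = ρ * τ θ' := by rw [hNdef]; simp only; rw [hdir_unit hper]
    · show x₀.1 * nθ.1 + x₀.2 * nθ.2 = ρ * τ θ
      rw [glin nθ]
      have hmem : nθ ∈ Submodule.span ℝ {nθ} := Submodule.mem_span_singleton_self nθ
      have := hg_ext ⟨nθ, hmem⟩
      rw [this]
      exact LinearPMap.mkSpanSingleton_apply ℝ ℝ hnθ (ρ * τ θ)
  · -- upper bound
    rintro b ⟨x, hx, rfl⟩
    exact hx θ
end
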